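/- Let M be an invertible real n×n matrix and let P, Ω, Q be real symmetric positive semi-definite n×n matrices. Set A = M + QM^{-ᵀ}Ω, B = QM^{-ᵀ}, C = M^{-ᵀ}Ω, D = M^{-ᵀ}. Then CP + D is invertible and M(I + PΩ)⁻¹PMᵀ + Q = (AP + B)(CP + D)⁻¹. -/

import Mathlib

open Matrix

open scoped MatrixOrder in
lemma isUnit_one_add_mul {n : ℕ} {Ω P : Matrix (Fin n) (Fin n) ℝ}
    (hP : P.PosSemidef) (hΩ : Ω.PosSemidef) :
    IsUnit (1 + Ω * P) := by
  rw [Matrix.isUnit_iff_isUnit_det, isUnit_iff_ne_zero]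
  have hs := CFC.sqrt_mul_sqrt_self P hP.nonneg
  have h1 : (1 : Matrix (Fin n) (Fin n) ℝ) + Ω * P
      = 1 + (Ω * CFC.sqrt P) * CFC.sqrt P := by rw [mul_assoc, hs]
  rw [h1, Matrix.det_one_add_mul_comm, ← mul_assoc]
  have hconj : (CFC.sqrt P * Ω * CFC.sqrt P).PosSemidef := by
    have := hΩ.conjTranspose_mul_mul_same (CFC.sqrt P)
    rwa [(CFC.sqrt_nonneg P).posSemidef.1] at this
  have hpd : ((1 : Matrix (Fin n) (Fin n) ℝ) + CFC.sqrt P * Ω * CFC.sqrt P).PosDef :=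
    Matrix.PosDef.add_posSemidef Matrix.PosDef.one hconj
  exact ne_of_gt hpd.det_pos

/-- The Kalman filter Riccati step as a Möbius (linear fractional) action:
with `A = M + Q M⁻ᵀ Ω`, `B = Q M⁻ᵀ`, `C = M⁻ᵀ Ω`, `D = M⁻ᵀ`, the matrix
`C P + D` is invertible and
`M (I + P Ω)⁻¹ P Mᵀ + Q = (A P + B) (C P + D)⁻¹`. -/
theorem kf_step_moebius {n : ℕ}
    (M P Ω Q : Matrix (Fin n) (Fin n) ℝ) (hM : IsUnit M)
    (hP : P.PosSemidef) (hΩ : Ω.PosSemidef) (hQ : Q.PosSemidef) :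
    IsUnit ((M⁻¹)ᵀ * Ω * P + (M⁻¹)ᵀ) ∧
    M * (1 + P * Ω)⁻¹ * P * Mᵀ + Q
      = ((M + Q * (M⁻¹)ᵀ * Ω) * P + Q * (M⁻¹)ᵀ)
        * ((M⁻¹)ᵀ * Ω * P + (M⁻¹)ᵀ)⁻¹ := by
  have dM := (Matrix.isUnit_iff_isUnit_det _).mp hM
  have dMT : IsUnit (Mᵀ).det := by rwa [Matrix.det_transpose]
  have hMM : (M⁻¹)ᵀ * Mᵀ = 1 := by
    rw [← Matrix.transpose_mul, Matrix.mul_nonsing_inv _ dM, Matrix.transpose_one]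
  have hMT : IsUnit ((M⁻¹)ᵀ) := by
    rw [Matrix.transpose_nonsing_inv, Matrix.isUnit_iff_isUnit_det]
    exact Matrix.isUnit_nonsing_inv_det _ dMT
  have hΩP : IsUnit (1 + Ω * P) := isUnit_one_add_mul hP hΩ
  have hPΩ : IsUnit (1 + P * Ω) := isUnit_one_add_mul hΩ hP
  have hkey : (M⁻¹)ᵀ * Ω * P + (M⁻¹)ᵀ = (M⁻¹)ᵀ * (1 + Ω * P) := by
    rw [mul_add, mul_one, mul_assoc, add_comm]
  have hunit : IsUnit ((M⁻¹)ᵀ * Ω * P + (M⁻¹)ᵀ) := by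
    rw [hkey]; exact hMT.mul hΩP
  refine ⟨hunit, ?_⟩
  have hinv : ((M⁻¹)ᵀ * Ω * P + (M⁻¹)ᵀ)⁻¹ = (1 + Ω * P)⁻¹ * Mᵀ := by
    rw [hkey, Matrix.mul_inv_rev, Matrix.transpose_nonsing_inv,
      Matrix.nonsing_inv_nonsing_inv _ dMT]
  have dΩP := (Matrix.isUnit_iff_isUnit_det _).mp hΩP
  have dPΩ := (Matrix.isUnit_iff_isUnit_det _).mp hPΩ
  have hPcomm : (1 + P * Ω)⁻¹ * P = P * (1 + Ω * P)⁻¹ := by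
    have h : (1 + P * Ω) * (P * (1 + Ω * P)⁻¹) = P := by
      rw [← mul_assoc]
      have h2 : (1 + P * Ω) * P = P * (1 + Ω * P) := by noncomm_ring
      rw [h2, mul_assoc, Matrix.mul_nonsing_inv _ dΩP, mul_one]
    have h3 : (1 + P * Ω)⁻¹ * ((1 + P * Ω) * (P * (1 + Ω * P)⁻¹)) = (1 + P * Ω)⁻¹ * P := by
      rw [h]
    rw [← mul_assoc, Matrix.nonsing_inv_mul _ dPΩ, one_mul] at h3
    exact h3.symm
  rw [hinv]
  have expand : (M + Q * (M⁻¹)ᵀ * Ω) * P + Q * (M⁻¹)ᵀ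
      = M * P + Q * (M⁻¹)ᵀ * (1 + Ω * P) := by noncomm_ring
  rw [expand, add_mul]
  have t2 : Q * (M⁻¹)ᵀ * (1 + Ω * P) * ((1 + Ω * P)⁻¹ * Mᵀ) = Q := by
    rw [mul_assoc (Q * (M⁻¹)ᵀ), ← mul_assoc (1 + Ω * P), Matrix.mul_nonsing_inv _ dΩP,
      one_mul, mul_assoc, hMM, mul_one]
  rw [t2]
  congr 1
  rw [mul_assoc M, hPcomm, ← mul_assoc, ← mul_assoc, mul_assoc]
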